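/- In the metric graph setup, fix the combinatorial graph. For any compact set Ω ⊂ ℂ and any compact set 𝓛 ⊂ (0,∞) there exists a constant C₁, depending only on Ω and 𝓛, such that for every choice of finite edge lengths ℓ_m ∈ 𝓛 the set of resonances of the Kirchhoff Laplacian P lying in Ω (i.e. the set of λ ∈ Ω admitting a nonzero outgoing resonant state) is finite and has at most C₁ elements. -/

import Mathlib

open MeasureTheory
open scoped Classical

/-- A finite combinatorial graph with `K ≥ 1` infinite leads (each attached to a vertex
at `x = 0`) and `M` finite edges, each with two distinct endpoints. -/
structure QGraph where
  /-- vertex set -/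
  V : Type
  fV : Fintype V
  /-- number of infinite leads -/
  K : ℕ
  /-- number of finite edges -/
  M : ℕ
  hK : 0 < K
  /-- the vertex to which lead `k` is attached (its `x = 0` end) -/
  leadV : Fin K → V
  /-- the `x = 0` endpoint of finite edge `m` -/
  ep0 : Fin M → V
  /-- the `x = ℓ_m` endpoint of finite edge `m` -/
  ep1 : Fin M → V
  ep_ne : ∀ m, ep0 m ≠ ep1 m

attribute [instance] QGraph.fV

/-- A function on the metric graph: one function per lead and one per finite edge
(given as globally defined functions; only values on `[0,∞)` resp. `[0,ℓ_m]` matter). -/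
structure GraphFun (G : QGraph) where
  lead : Fin G.K → ℝ → ℂ
  edge : Fin G.M → ℝ → ℂ

/-- All component functions are twice continuously differentiable. -/
def GraphFun.Smooth {G : QGraph} (u : GraphFun G) : Prop :=
  (∀ k, ContDiff ℝ 2 (u.lead k)) ∧ (∀ m, ContDiff ℝ 2 (u.edge m))

/-- Kirchhoff vertex conditions for edge lengths `ℓ`: continuity at each vertex
(a common vertex value) and vanishing of the sum of outward normal derivatives
`∂_ν u_m(0) = −u_m'(0)`, `∂_ν u_m(ℓ_m) = u_m'(ℓ_m)` at each vertex. -/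
def GraphFun.Kirchhoff {G : QGraph} (u : GraphFun G) (ℓ : Fin G.M → ℝ) : Prop :=
  (∃ val : G.V → ℂ,
    (∀ k, u.lead k 0 = val (G.leadV k)) ∧
    (∀ m, u.edge m 0 = val (G.ep0 m)) ∧
    (∀ m, u.edge m (ℓ m) = val (G.ep1 m))) ∧
  (∀ v : G.V,
    (∑ k ∈ Finset.univ.filter (fun k => G.leadV k = v), -(deriv (u.lead k) 0))
    + (∑ m ∈ Finset.univ.filter (fun m => G.ep0 m = v), -(deriv (u.edge m) 0))
    + (∑ m ∈ Finset.univ.filter (fun m => G.ep1 m = v), deriv (u.edge m) (ℓ m)) = 0)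

/-- The tuple does not vanish identically on the metric graph. -/
def GraphFun.Nontrivial {G : QGraph} (u : GraphFun G) (ℓ : Fin G.M → ℝ) : Prop :=
  (∃ k, ∃ x : ℝ, 0 ≤ x ∧ u.lead k x ≠ 0) ∨
  (∃ m, ∃ x ∈ Set.Icc (0:ℝ) (ℓ m), u.edge m x ≠ 0)

/-- `u` is an outgoing resonant state for `λ`: `C²`, Kirchhoff conditions,
`−u_m'' = λ² u_m` on every finite edge, and `u_k(x) = a_k e^{iλx}` on every lead. -/
def IsResonantState (G : QGraph) (ℓ : Fin G.M → ℝ) (lam : ℂ) (u : GraphFun G) : Prop :=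
  u.Smooth ∧ u.Kirchhoff ℓ ∧
  (∀ m, ∀ x ∈ Set.Icc (0:ℝ) (ℓ m), -(deriv (deriv (u.edge m)) x) = lam ^ 2 * u.edge m x) ∧
  (∃ a : Fin G.K → ℂ, ∀ k, ∀ x : ℝ, 0 ≤ x →
    u.lead k x = a k * Complex.exp (Complex.I * lam * (x : ℂ)))

/-- `λ` is a resonance of the Kirchhoff Laplacian: it admits a nonzero outgoing
resonant state. -/
def IsResonance (G : QGraph) (ℓ : Fin G.M → ℝ) (lam : ℂ) : Prop :=
  ∃ u : GraphFun G, IsResonantState G ℓ lam u ∧ u.Nontrivial ℓ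

/-- The squared `L²` norm of a tuple on the metric graph. -/
noncomputable def graphNormSq (G : QGraph) (ℓ : Fin G.M → ℝ) (u : GraphFun G) : ℝ :=
  (∑ k, ∫ x in Set.Ioi (0:ℝ), ‖u.lead k x‖ ^ 2) +
  ∑ m, ∫ x in (0:ℝ)..(ℓ m), ‖u.edge m x‖ ^ 2

/-- The squared `L²` norm of `(P − z)u = (−u_m'' − z·u_m)_m` on the metric graph. -/
noncomputable def graphDefectSq (G : QGraph) (ℓ : Fin G.M → ℝ) (z : ℂ) (u : GraphFun G) : ℝ :=
  (∑ k, ∫ x in Set.Ioi (0:ℝ), ‖-(deriv (deriv (u.lead k)) x) - z * u.lead k x‖ ^ 2) +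
  ∑ m, ∫ x in (0:ℝ)..(ℓ m), ‖-(deriv (deriv (u.edge m)) x) - z * u.edge m x‖ ^ 2

/-- `u` is supported in `[0, R]` on every infinite lead. -/
def LeadSupport (G : QGraph) (u : GraphFun G) (R : ℝ) : Prop :=
  ∀ k, ∀ x : ℝ, R < x → u.lead k x = 0

/-! ### Auxiliary matrix setup -/

/-- A vertex is isolated if no lead or finite edge is attached to it. -/
def QGraph.isolated (G : QGraph) (v : G.V) : Prop :=
  (∀ k, G.leadV k ≠ v) ∧ (∀ m, G.ep0 m ≠ v) ∧ (∀ m, G.ep1 m ≠ v)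

/-- The secular matrix of the quantum graph. -/
noncomputable def rmat (G : QGraph) (ℓ : Fin G.M → ℝ) (lam : ℂ) :
    Matrix (Fin G.K ⊕ Fin G.M ⊕ Fin G.M ⊕ G.V) (Fin G.K ⊕ Fin G.M ⊕ Fin G.M ⊕ G.V) ℂ :=
  fun i j =>
    match i, j with
    | Sum.inl k, Sum.inl k' => if k = k' then 1 else 0
    | Sum.inl k, Sum.inr (Sum.inr (Sum.inr v)) => if G.leadV k = v then -1 else 0
    | Sum.inl _, _ => 0
    | Sum.inr (Sum.inl m), Sum.inr (Sum.inl m') => if m = m' then 1 else 0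
    | Sum.inr (Sum.inl m), Sum.inr (Sum.inr (Sum.inr v)) => if G.ep0 m = v then -1 else 0
    | Sum.inr (Sum.inl _), _ => 0
    | Sum.inr (Sum.inr (Sum.inl m)), Sum.inr (Sum.inl m') =>
        if m = m' then lam * Complex.cos (lam * ℓ m) else 0
    | Sum.inr (Sum.inr (Sum.inl m)), Sum.inr (Sum.inr (Sum.inl m')) =>
        if m = m' then Complex.sin (lam * ℓ m) else 0
    | Sum.inr (Sum.inr (Sum.inl m)), Sum.inr (Sum.inr (Sum.inr v)) =>
        if G.ep1 m = v then -lam else 0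
    | Sum.inr (Sum.inr (Sum.inl _)), _ => 0
    | Sum.inr (Sum.inr (Sum.inr v)), Sum.inl k => if G.leadV k = v then -(Complex.I * lam) else 0
    | Sum.inr (Sum.inr (Sum.inr v)), Sum.inr (Sum.inl m) =>
        if G.ep1 m = v then -(lam * Complex.sin (lam * ℓ m)) else 0
    | Sum.inr (Sum.inr (Sum.inr v)), Sum.inr (Sum.inr (Sum.inl m)) =>
        (if G.ep0 m = v then -1 else 0) + (if G.ep1 m = v then Complex.cos (lam * ℓ m) else 0)
    | Sum.inr (Sum.inr (Sum.inr v)), Sum.inr (Sum.inr (Sum.inr w)) =>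
        if v = w ∧ G.isolated v then 1 else 0

section RowLemmas

variable (G : QGraph) (ℓ : Fin G.M → ℝ) (lam : ℂ)
  (x : (Fin G.K ⊕ Fin G.M ⊕ Fin G.M ⊕ G.V) → ℂ)

lemma row_lead (k : Fin G.K) :
    (rmat G ℓ lam).mulVec x (Sum.inl k)
      = x (Sum.inl k) - x (Sum.inr (Sum.inr (Sum.inr (G.leadV k)))) := by
  simp only [Matrix.mulVec, dotProduct, Fintype.sum_sum_type, rmat]
  simp [ite_mul, Finset.sum_ite_eq, sub_eq_add_neg]

lemma row_e0 (m : Fin G.M) :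
    (rmat G ℓ lam).mulVec x (Sum.inr (Sum.inl m))
      = x (Sum.inr (Sum.inl m)) - x (Sum.inr (Sum.inr (Sum.inr (G.ep0 m)))) := by
  simp only [Matrix.mulVec, dotProduct, Fintype.sum_sum_type, rmat]
  simp [ite_mul, Finset.sum_ite_eq, sub_eq_add_neg]

lemma row_e1 (m : Fin G.M) :
    (rmat G ℓ lam).mulVec x (Sum.inr (Sum.inr (Sum.inl m)))
      = lam * Complex.cos (lam * ℓ m) * x (Sum.inr (Sum.inl m))
        + Complex.sin (lam * ℓ m) * x (Sum.inr (Sum.inr (Sum.inl m)))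
        - lam * x (Sum.inr (Sum.inr (Sum.inr (G.ep1 m)))) := by
  simp only [Matrix.mulVec, dotProduct, Fintype.sum_sum_type, rmat]
  simp [ite_mul, Finset.sum_ite_eq, sub_eq_add_neg]
  ring

lemma row_vert (v : G.V) :
    (rmat G ℓ lam).mulVec x (Sum.inr (Sum.inr (Sum.inr v)))
      = (∑ k, if G.leadV k = v then -(Complex.I * lam) * x (Sum.inl k) else 0)
        + (∑ m, if G.ep1 m = v then
            -(lam * Complex.sin (lam * ℓ m)) * x (Sum.inr (Sum.inl m)) else 0)
        + ((∑ m, if G.ep0 m = v then -(x (Sum.inr (Sum.inr (Sum.inl m)))) else 0)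
          + (∑ m, if G.ep1 m = v then
              Complex.cos (lam * ℓ m) * x (Sum.inr (Sum.inr (Sum.inl m))) else 0))
        + (if G.isolated v then x (Sum.inr (Sum.inr (Sum.inr v))) else 0) := by
  simp only [Matrix.mulVec, dotProduct, Fintype.sum_sum_type, rmat]
  have h_a : (∑ k, (if G.leadV k = v then -(Complex.I * lam) else 0) * x (Sum.inl k))
      = ∑ k, if G.leadV k = v then -(Complex.I * lam) * x (Sum.inl k) else 0 := by
    apply Finset.sum_congr rfl; intro k _; split_ifs <;> simp
  have h_b : (∑ m, (if G.ep1 m = v then -(lam * Complex.sin (lam * ℓ m)) else 0)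
        * x (Sum.inr (Sum.inl m)))
      = ∑ m, if G.ep1 m = v then
          -(lam * Complex.sin (lam * ℓ m)) * x (Sum.inr (Sum.inl m)) else 0 := by
    apply Finset.sum_congr rfl; intro m _; split_ifs <;> simp
  have h_c : (∑ m, ((if G.ep0 m = v then -1 else 0)
          + (if G.ep1 m = v then Complex.cos (lam * ℓ m) else 0))
        * x (Sum.inr (Sum.inr (Sum.inl m))))
      = (∑ m, if G.ep0 m = v then -(x (Sum.inr (Sum.inr (Sum.inl m)))) else 0)
        + (∑ m, if G.ep1 m = v then
            Complex.cos (lam * ℓ m) * x (Sum.inr (Sum.inr (Sum.inl m))) else 0) := by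
    rw [← Finset.sum_add_distrib]
    apply Finset.sum_congr rfl; intro m _; split_ifs <;> ring
  have h_d : (∑ w, (if v = w ∧ G.isolated v then 1 else 0) * x (Sum.inr (Sum.inr (Sum.inr w))))
      = if G.isolated v then x (Sum.inr (Sum.inr (Sum.inr v))) else 0 := by
    by_cases hiso : G.isolated v
    · simp [hiso, ite_mul, Finset.sum_ite_eq]
    · simp [hiso]
  rw [h_a, h_b, h_c, h_d]
  ring

end RowLemmas

lemma hasDerivAt_ccos_real (lam : ℂ) (x : ℝ) :
    HasDerivAt (fun y : ℝ => Complex.cos (lam * y)) (-Complex.sin (lam * x) * lam) x := by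
  have h0 : HasDerivAt (fun y : ℝ => ((y : ℂ))) 1 x := by
    simpa using (hasDerivAt_id x).ofReal_comp
  have h1 : HasDerivAt (fun y : ℝ => lam * (y : ℂ)) lam x := by
    simpa using h0.const_mul lam
  have := (Complex.hasDerivAt_cos (lam * x)).scomp x h1
  rw [show -Complex.sin (lam * x) * lam = lam • -Complex.sin (lam * x) by simp [smul_eq_mul, mul_comm]]
  exact this

lemma hasDerivAt_csin_real (lam : ℂ) (x : ℝ) :
    HasDerivAt (fun y : ℝ => Complex.sin (lam * y)) (Complex.cos (lam * x) * lam) x := by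
  have h0 : HasDerivAt (fun y : ℝ => ((y : ℂ))) 1 x := by
    simpa using (hasDerivAt_id x).ofReal_comp
  have h1 : HasDerivAt (fun y : ℝ => lam * (y : ℂ)) lam x := by
    simpa using h0.const_mul lam
  have := (Complex.hasDerivAt_sin (lam * x)).scomp x h1
  rw [show Complex.cos (lam * x) * lam = lam • Complex.cos (lam * x) by simp [smul_eq_mul, mul_comm]]
  exact this

lemma ode_rep (lam : ℂ) (c : ℝ) (w : ℝ → ℂ) (hw : ContDiff ℝ 2 w)
    (hode : ∀ x ∈ Set.Icc (0:ℝ) c, -(deriv (deriv w) x) = lam ^ 2 * w x) :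
    ∀ x ∈ Set.Icc (0:ℝ) c,
      (lam * w x = lam * w 0 * Complex.cos (lam * x) + deriv w 0 * Complex.sin (lam * x)) ∧
      (deriv w x = deriv w 0 * Complex.cos (lam * x) - lam * w 0 * Complex.sin (lam * x)) := by
  have hw1 : Differentiable ℝ w := hw.differentiable (by norm_num)
  have hw2 : Differentiable ℝ (deriv w) := by
    have h2 : ContDiff ℝ ((1 : WithTop ℕ∞) + 1) w := by
      rw [show ((1 : WithTop ℕ∞) + 1) = 2 from rfl]; exact hw
    exact (contDiff_succ_iff_deriv.mp h2).2.2.differentiable (by norm_num)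
  set h₁ : ℝ → ℂ := fun x => deriv w x * Complex.cos (lam * x) + lam * w x * Complex.sin (lam * x)
    with hh₁
  set h₂ : ℝ → ℂ := fun x => lam * w x * Complex.cos (lam * x) - deriv w x * Complex.sin (lam * x)
    with hh₂
  have hd1 : ∀ x : ℝ, HasDerivAt h₁
      ((deriv (deriv w) x + lam ^ 2 * w x) * Complex.cos (lam * x)) x := by
    intro x
    have e1 := ((hw2 x).hasDerivAt.mul (hasDerivAt_ccos_real lam x))
    have e2 := (((hw1 x).hasDerivAt.const_mul lam).mul (hasDerivAt_csin_real lam x))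
    have := e1.add e2
    refine this.congr_deriv ?_
    ring
  have hd2 : ∀ x : ℝ, HasDerivAt h₂
      (-((deriv (deriv w) x + lam ^ 2 * w x) * Complex.sin (lam * x))) x := by
    intro x
    have e1 := (((hw1 x).hasDerivAt.const_mul lam).mul (hasDerivAt_ccos_real lam x))
    have e2 := ((hw2 x).hasDerivAt.mul (hasDerivAt_csin_real lam x))
    have := e1.sub e2
    refine this.congr_deriv ?_
    ring
  have hzero : ∀ x ∈ Set.Icc (0:ℝ) c, deriv (deriv w) x + lam ^ 2 * w x = 0 := by
    intro x hx
    have := hode x hx; linear_combination -this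
  have hc1 : ∀ x ∈ Set.Icc (0:ℝ) c, h₁ x = h₁ 0 := by
    apply constant_of_has_deriv_right_zero
    · exact fun x _ => ((hd1 x).continuousAt).continuousWithinAt
    · intro x hx
      have hz := hzero x (Set.mem_Icc.2 ⟨hx.1, hx.2.le⟩)
      have h := hd1 x
      rw [hz, zero_mul] at h
      exact h.hasDerivWithinAt
  have hc2 : ∀ x ∈ Set.Icc (0:ℝ) c, h₂ x = h₂ 0 := by
    apply constant_of_has_deriv_right_zero
    · exact fun x _ => ((hd2 x).continuousAt).continuousWithinAt
    · intro x hx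
      have hz := hzero x (Set.mem_Icc.2 ⟨hx.1, hx.2.le⟩)
      have h := hd2 x
      rw [hz, zero_mul, neg_zero] at h
      exact h.hasDerivWithinAt
  intro x hx
  have e1 := hc1 x hx
  have e2 := hc2 x hx
  have h10 : h₁ 0 = deriv w 0 := by simp [hh₁]
  have h20 : h₂ 0 = lam * w 0 := by simp [hh₂]
  rw [h10] at e1
  rw [h20] at e2
  have hpyth : Complex.sin (lam * x) ^ 2 + Complex.cos (lam * x) ^ 2 = 1 :=
    Complex.sin_sq_add_cos_sq _
  constructor
  · have : h₂ x * Complex.cos (lam * x) + h₁ x * Complex.sin (lam * x) = lam * w x := by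
      simp only [hh₁, hh₂]
      linear_combination (lam * w x) * hpyth
    rw [e1, e2] at this
    linear_combination -this
  · have : h₁ x * Complex.cos (lam * x) - h₂ x * Complex.sin (lam * x) = deriv w x := by
      simp only [hh₁, hh₂]
      linear_combination (deriv w x) * hpyth
    rw [e1, e2] at this
    linear_combination -this

lemma ode_zero (lam : ℂ) (c : ℝ) (w : ℝ → ℂ) (hw : ContDiff ℝ 2 w)
    (hode : ∀ x ∈ Set.Icc (0:ℝ) c, -(deriv (deriv w) x) = lam ^ 2 * w x)
    (h0 : w 0 = 0) (h0' : deriv w 0 = 0) :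
    ∀ x ∈ Set.Icc (0:ℝ) c, w x = 0 := by
  have hw1 : Differentiable ℝ w := hw.differentiable (by norm_num)
  have hrep := ode_rep lam c w hw hode
  have hder : ∀ x ∈ Set.Icc (0:ℝ) c, deriv w x = 0 := by
    intro x hx
    rw [(hrep x hx).2, h0, h0']
    ring
  have : ∀ x ∈ Set.Icc (0:ℝ) c, w x = w 0 := by
    apply constant_of_has_deriv_right_zero
    · exact hw1.continuous.continuousOn
    · intro x hx
      have h := (hw1 x).hasDerivAt
      rw [hder x (Set.mem_Icc.2 ⟨hx.1, hx.2.le⟩)] at h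
      exact h.hasDerivWithinAt
  intro x hx
  rw [this x hx, h0]

lemma hasDerivAt_cexp_real (lam : ℂ) (x : ℝ) :
    HasDerivAt (fun y : ℝ => Complex.exp (lam * y)) (Complex.exp (lam * x) * lam) x := by
  have h0 : HasDerivAt (fun y : ℝ => ((y : ℂ))) 1 x := by
    simpa using (hasDerivAt_id x).ofReal_comp
  have h1 : HasDerivAt (fun y : ℝ => lam * (y : ℂ)) lam x := by
    simpa using h0.const_mul lam
  have := (Complex.hasDerivAt_exp (lam * x)).scomp x h1
  rw [show Complex.exp (lam * x) * lam = lam • Complex.exp (lam * x) by simp [smul_eq_mul, mul_comm]]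
  exact this

lemma lead_deriv (lam a : ℂ) (f : ℝ → ℂ) (hf : ContDiff ℝ 2 f)
    (h : ∀ x : ℝ, 0 ≤ x → f x = a * Complex.exp (Complex.I * lam * x)) :
    deriv f 0 = Complex.I * lam * a := by
  have hg : HasDerivAt (fun x : ℝ => a * Complex.exp (Complex.I * lam * x))
      (Complex.I * lam * a) 0 := by
    have := (hasDerivAt_cexp_real (Complex.I * lam) 0).const_mul a
    simpa [mul_comm, mul_assoc, mul_left_comm] using this
  have hfd : HasDerivWithinAt f (deriv f 0) (Set.Ici 0) 0 :=
    ((hf.differentiable (by norm_num) 0).hasDerivAt).hasDerivWithinAt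
  have hgw1 : HasDerivWithinAt (fun x : ℝ => a * Complex.exp (Complex.I * lam * x))
      (deriv f 0) (Set.Ici 0) 0 :=
    hfd.congr (fun y hy => (h y hy).symm) ((h 0 le_rfl).symm)
  have hgw2 : HasDerivWithinAt (fun x : ℝ => a * Complex.exp (Complex.I * lam * x))
      (Complex.I * lam * a) (Set.Ici 0) 0 := hg.hasDerivWithinAt
  have hu : UniqueDiffWithinAt ℝ (Set.Ici (0:ℝ)) 0 :=
    uniqueDiffOn_Ici 0 0 Set.self_mem_Ici
  rw [← hgw1.derivWithin hu, ← hgw2.derivWithin hu]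

lemma not_isolated_lead (G : QGraph) (k : Fin G.K) : ¬ G.isolated (G.leadV k) :=
  fun h => h.1 k rfl

lemma not_isolated_ep0 (G : QGraph) (m : Fin G.M) : ¬ G.isolated (G.ep0 m) :=
  fun h => h.2.1 m rfl

lemma not_isolated_ep1 (G : QGraph) (m : Fin G.M) : ¬ G.isolated (G.ep1 m) :=
  fun h => h.2.2 m rfl

/-- A resonance is a zero of the secular determinant. -/
lemma resonance_det (G : QGraph) (ℓ : Fin G.M → ℝ) (hl : ∀ m, 0 ≤ ℓ m) (lam : ℂ)
    (h : IsResonance G ℓ lam) : (rmat G ℓ lam).det = 0 := by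
  classical
  obtain ⟨u, ⟨⟨hsl, hse⟩, ⟨⟨val, hval_l, hval_0, hval_1⟩, hflux⟩, hode, ⟨a, ha⟩⟩, hnt⟩ := h
  set x : (Fin G.K ⊕ Fin G.M ⊕ Fin G.M ⊕ G.V) → ℂ :=
    Sum.elim a (Sum.elim (fun m => u.edge m 0)
      (Sum.elim (fun m => deriv (u.edge m) 0)
        (fun v => if G.isolated v then 0 else val v))) with hx
  have hak : ∀ k, u.lead k 0 = a k := by
    intro k
    have := ha k 0 le_rfl
    simpa using this
  have hld : ∀ k, deriv (u.lead k) 0 = Complex.I * lam * a k := by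
    intro k
    exact lead_deriv lam (a k) (u.lead k) (hsl k) (fun y hy => ha k y hy)
  have hrep : ∀ m, _ := fun m => ode_rep lam (ℓ m) (u.edge m) (hse m) (hode m)
  have hrepl : ∀ m, _ := fun m => hrep m (ℓ m) (Set.mem_Icc.2 ⟨hl m, le_rfl⟩)
  -- the kernel vector is nonzero
  have hxne : x ≠ 0 := by
    intro hx0
    have hzero : ∀ i, x i = 0 := fun i => congrFun hx0 i
    have haz : ∀ k, a k = 0 := fun k => hzero (Sum.inl k)
    have hez : ∀ m, u.edge m 0 = 0 := fun m => hzero (Sum.inr (Sum.inl m))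
    have hez' : ∀ m, deriv (u.edge m) 0 = 0 := fun m => hzero (Sum.inr (Sum.inr (Sum.inl m)))
    rcases hnt with ⟨k, y, hy, hne⟩ | ⟨m, y, hy, hne⟩
    · exact hne (by rw [ha k y hy, haz k, zero_mul])
    · exact hne (ode_zero lam (ℓ m) (u.edge m) (hse m) (hode m) (hez m) (hez' m) y hy)
  -- the kernel vector is in the kernel
  have hmul : (rmat G ℓ lam).mulVec x = 0 := by
    funext i
    rcases i with k | m | m | v
    · rw [row_lead]
      simp only [hx, Sum.elim_inl, Sum.elim_inr, Pi.zero_apply]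
      rw [if_neg (not_isolated_lead G k), ← hval_l k, hak k, sub_self]
    · rw [row_e0]
      simp only [hx, Sum.elim_inl, Sum.elim_inr, Pi.zero_apply]
      rw [if_neg (not_isolated_ep0 G m), ← hval_0 m, sub_self]
    · rw [row_e1]
      simp only [hx, Sum.elim_inl, Sum.elim_inr, Pi.zero_apply]
      rw [if_neg (not_isolated_ep1 G m), ← hval_1 m]
      have := (hrepl m).1
      linear_combination -this
    · rw [row_vert]
      simp only [hx, Sum.elim_inl, Sum.elim_inr, Pi.zero_apply]
      by_cases hiso : G.isolated v
      · rw [if_pos hiso, if_pos hiso]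
        have h1 : ∀ k : Fin G.K, ¬ (G.leadV k = v) := fun k hk => hiso.1 k hk
        have h2 : ∀ m : Fin G.M, ¬ (G.ep0 m = v) := fun m hm => hiso.2.1 m hm
        have h3 : ∀ m : Fin G.M, ¬ (G.ep1 m = v) := fun m hm => hiso.2.2 m hm
        simp [h1, h2, h3]
      · have hfl := hflux v
        have e1 : (∑ k, if G.leadV k = v then -(Complex.I * lam) * a k else 0)
            = ∑ k ∈ Finset.univ.filter (fun k => G.leadV k = v), -(deriv (u.lead k) 0) := by
          rw [Finset.sum_filter]
          apply Finset.sum_congr rfl; intro k _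
          split_ifs with hc
          · rw [hld k]; ring
          · rfl
        have e2 : (∑ m, if G.ep0 m = v then -(deriv (u.edge m) 0) else 0)
            = ∑ m ∈ Finset.univ.filter (fun m => G.ep0 m = v), -(deriv (u.edge m) 0) := by
          rw [Finset.sum_filter]
        have e3 : (∑ m, if G.ep1 m = v then
              -(lam * Complex.sin (lam * ℓ m)) * u.edge m 0 else 0)
            + (∑ m, if G.ep1 m = v then
              Complex.cos (lam * ℓ m) * deriv (u.edge m) 0 else 0)
            = ∑ m ∈ Finset.univ.filter (fun m => G.ep1 m = v), deriv (u.edge m) (ℓ m) := by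
          rw [Finset.sum_filter, ← Finset.sum_add_distrib]
          apply Finset.sum_congr rfl; intro m _
          split_ifs with hc
          · have := (hrepl m).2
            linear_combination -this
          · simp
        rw [if_neg hiso, e1, add_zero]
        have hre : ∀ (A B C D : ℂ), (A + B) + (C + D) = A + C + (B + D) := by intros; ring
        rw [hre, e2, e3]
        exact hfl
  exact Matrix.exists_mulVec_eq_zero_iff.mp ⟨x, hxne, hmul⟩

lemma sum_swap_filter {ι : Type} [Fintype ι] {V : Type} [Fintype V]
    (g : ι → V) (f : V → ℂ) (t : ι → ℂ) :
    ∑ v, f v * ∑ i, (if g i = v then t i else 0) = ∑ i, f (g i) * t i := by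
  simp_rw [Finset.mul_sum]
  rw [Finset.sum_comm]
  apply Finset.sum_congr rfl
  intro i _
  simp [mul_ite, mul_zero, Finset.sum_ite_eq]

lemma energy_identity (c s : ℝ) (hpy : c ^ 2 - s ^ 2 = 1) (α β : ℂ) :
    (-(starRingEnd ℂ α * β)
      + starRingEnd ℂ ((c : ℂ) * α + (s : ℂ) * β)
        * ((s : ℂ) * α + (c : ℂ) * β)).re
    = s * ((c - s) * (Complex.normSq α + Complex.normSq β)
        + s * Complex.normSq (α + β)) := by
  have hpyC : ((c : ℂ)) ^ 2 - ((s : ℂ)) ^ 2 = 1 := by exact_mod_cast hpy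
  have h1 : ((Complex.normSq α : ℝ) : ℂ) = starRingEnd ℂ α * α := by
    rw [mul_comm, Complex.mul_conj]
  have h2 : ((Complex.normSq β : ℝ) : ℂ) = starRingEnd ℂ β * β := by
    rw [mul_comm, Complex.mul_conj]
  have h3 : ((Complex.normSq (α + β) : ℝ) : ℂ)
      = (starRingEnd ℂ α + starRingEnd ℂ β) * (α + β) := by
    rw [← map_add, mul_comm, Complex.mul_conj]
  have hX : (-(starRingEnd ℂ α * β)
      + starRingEnd ℂ ((c : ℂ) * α + (s : ℂ) * β)
        * ((s : ℂ) * α + (c : ℂ) * β))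
      = ((s * ((c - s) * (Complex.normSq α + Complex.normSq β)
        + s * Complex.normSq (α + β)) : ℝ) : ℂ) := by
    rw [map_add, map_mul, map_mul, Complex.conj_ofReal, Complex.conj_ofReal]
    rw [Complex.ofReal_mul, Complex.ofReal_add, Complex.ofReal_mul, Complex.ofReal_mul,
      Complex.ofReal_add, Complex.ofReal_sub, h1, h2, h3]
    linear_combination (starRingEnd ℂ α * β) * hpyC
  rw [hX, Complex.ofReal_re]

lemma energy_nonneg (r : ℝ) (hr : 0 < r) (α β : ℂ) :
    0 ≤ (-(starRingEnd ℂ α * β)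
      + starRingEnd ℂ ((Real.cosh r : ℂ) * α + (Real.sinh r : ℂ) * β)
        * ((Real.sinh r : ℂ) * α + (Real.cosh r : ℂ) * β)).re := by
  rw [energy_identity (Real.cosh r) (Real.sinh r) (Real.cosh_sq_sub_sinh_sq r)]
  have hs : 0 < Real.sinh r := by
    have := Real.sinh_lt_sinh.mpr hr
    simpa using this
  have hcs : 0 < Real.cosh r - Real.sinh r := by
    rw [Real.cosh_sub_sinh]; exact Real.exp_pos _
  have := Complex.normSq_nonneg α
  have := Complex.normSq_nonneg β
  have := Complex.normSq_nonneg (α + β)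
  positivity

lemma energy_eq_zero (r : ℝ) (hr : 0 < r) (α β : ℂ)
    (h : (-(starRingEnd ℂ α * β)
      + starRingEnd ℂ ((Real.cosh r : ℂ) * α + (Real.sinh r : ℂ) * β)
        * ((Real.sinh r : ℂ) * α + (Real.cosh r : ℂ) * β)).re = 0) :
    α = 0 ∧ β = 0 := by
  rw [energy_identity (Real.cosh r) (Real.sinh r) (Real.cosh_sq_sub_sinh_sq r)] at h
  have hs : 0 < Real.sinh r := by
    have := Real.sinh_lt_sinh.mpr hr
    simpa using this
  have hcs : 0 < Real.cosh r - Real.sinh r := by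
    rw [Real.cosh_sub_sinh]; exact Real.exp_pos _
  have h1 := Complex.normSq_nonneg α
  have h2 := Complex.normSq_nonneg β
  have h3 := Complex.normSq_nonneg (α + β)
  have hb : (Real.cosh r - Real.sinh r) * (Complex.normSq α + Complex.normSq β)
      + Real.sinh r * Complex.normSq (α + β) = 0 := by
    rcases mul_eq_zero.mp h with h' | h'
    · exact absurd h' hs.ne'
    · exact h'
  have hsum0 : Complex.normSq α + Complex.normSq β = 0 := by nlinarith
  have hαβ : Complex.normSq α = 0 ∧ Complex.normSq β = 0 := by
    constructor <;> nlinarith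
  exact ⟨Complex.normSq_eq_zero.1 hαβ.1, Complex.normSq_eq_zero.1 hαβ.2⟩

/-- The secular determinant does not vanish at `λ = i`. -/
lemma det_I_ne (G : QGraph) (ℓ : Fin G.M → ℝ) (hl : ∀ m, 0 < ℓ m) :
    (rmat G ℓ Complex.I).det ≠ 0 := by
  classical
  intro hdet
  obtain ⟨x, hxne, hmul⟩ := Matrix.exists_mulVec_eq_zero_iff.mpr hdet
  set a : Fin G.K → ℂ := fun k => x (Sum.inl k) with ha
  set α : Fin G.M → ℂ := fun m => x (Sum.inr (Sum.inl m)) with hα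
  set β : Fin G.M → ℂ := fun m => x (Sum.inr (Sum.inr (Sum.inl m))) with hβ
  set w : G.V → ℂ := fun v => x (Sum.inr (Sum.inr (Sum.inr v))) with hw
  have hcos : ∀ r : ℝ, Complex.cos (Complex.I * r) = (Real.cosh r : ℂ) := by
    intro r; rw [mul_comm, Complex.cos_mul_I, Complex.ofReal_cosh]
  have hsin : ∀ r : ℝ, Complex.sin (Complex.I * r) = (Real.sinh r : ℂ) * Complex.I := by
    intro r; rw [mul_comm, Complex.sin_mul_I, Complex.ofReal_sinh]
  have eq1 : ∀ k, a k = w (G.leadV k) := by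
    intro k
    have h0 := congrFun hmul (Sum.inl k)
    rw [row_lead] at h0
    simp only [Pi.zero_apply] at h0
    exact sub_eq_zero.mp h0
  have eq2 : ∀ m, α m = w (G.ep0 m) := by
    intro m
    have h0 := congrFun hmul (Sum.inr (Sum.inl m))
    rw [row_e0] at h0
    simp only [Pi.zero_apply] at h0
    exact sub_eq_zero.mp h0
  have eq3 : ∀ m, (Real.cosh (ℓ m) : ℂ) * α m + (Real.sinh (ℓ m) : ℂ) * β m
      = w (G.ep1 m) := by
    intro m
    have h0 := congrFun hmul (Sum.inr (Sum.inr (Sum.inl m)))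
    rw [row_e1] at h0
    simp only [Pi.zero_apply] at h0
    rw [hcos, hsin] at h0
    have h0' : Complex.I * ((Real.cosh (ℓ m) : ℂ) * α m + (Real.sinh (ℓ m) : ℂ) * β m
        - w (G.ep1 m)) = 0 := by
      linear_combination h0
    rcases mul_eq_zero.mp h0' with h' | h'
    · exact absurd h' Complex.I_ne_zero
    · linear_combination h'
  have eq4 : ∀ v, (∑ k, if G.leadV k = v then a k else 0)
      + (∑ m, if G.ep1 m = v then (Real.sinh (ℓ m) : ℂ) * α m else 0)
      + ((∑ m, if G.ep0 m = v then -(β m) else 0)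
        + (∑ m, if G.ep1 m = v then (Real.cosh (ℓ m) : ℂ) * β m else 0))
      + (if G.isolated v then w v else 0) = 0 := by
    intro v
    have h0 := congrFun hmul (Sum.inr (Sum.inr (Sum.inr v)))
    rw [row_vert] at h0
    simp only [Pi.zero_apply] at h0
    have t1 : (∑ k, if G.leadV k = v then -(Complex.I * Complex.I) * a k else 0)
        = ∑ k, if G.leadV k = v then a k else 0 := by
      apply Finset.sum_congr rfl; intro k _
      split_ifs
      · rw [Complex.I_mul_I]; ring
      · rfl
    have t2 : (∑ m, if G.ep1 m = v then
          -(Complex.I * Complex.sin (Complex.I * ℓ m)) * α m else 0)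
        = ∑ m, if G.ep1 m = v then (Real.sinh (ℓ m) : ℂ) * α m else 0 := by
      apply Finset.sum_congr rfl; intro m _
      split_ifs
      · rw [hsin]
        have : Complex.I * ((Real.sinh (ℓ m) : ℂ) * Complex.I)
            = -(Real.sinh (ℓ m) : ℂ) := by
          have := Complex.I_mul_I
          linear_combination (Real.sinh (ℓ m) : ℂ) * this
        rw [this]; ring
      · rfl
    have t3 : (∑ m, if G.ep1 m = v then
          Complex.cos (Complex.I * ℓ m) * β m else 0)
        = ∑ m, if G.ep1 m = v then (Real.cosh (ℓ m) : ℂ) * β m else 0 := by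
      apply Finset.sum_congr rfl; intro m _
      split_ifs
      · rw [hcos]
      · rfl
    rw [t1, t2, t3] at h0
    exact h0
  -- multiply row v by conj (w v) and sum
  have hsum : (∑ k, starRingEnd ℂ (a k) * a k)
      + (∑ m, (-(starRingEnd ℂ (α m) * β m)
          + starRingEnd ℂ ((Real.cosh (ℓ m) : ℂ) * α m + (Real.sinh (ℓ m) : ℂ) * β m)
            * ((Real.sinh (ℓ m) : ℂ) * α m + (Real.cosh (ℓ m) : ℂ) * β m)))
      + (∑ v, if G.isolated v then starRingEnd ℂ (w v) * w v else 0) = 0 := by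
    have h0 : ∑ v, starRingEnd ℂ (w v) * ((∑ k, if G.leadV k = v then a k else 0)
        + (∑ m, if G.ep1 m = v then (Real.sinh (ℓ m) : ℂ) * α m else 0)
        + ((∑ m, if G.ep0 m = v then -(β m) else 0)
          + (∑ m, if G.ep1 m = v then (Real.cosh (ℓ m) : ℂ) * β m else 0))
        + (if G.isolated v then w v else 0)) = 0 := by
      apply Finset.sum_eq_zero
      intro v _
      rw [eq4 v, mul_zero]
    simp only [mul_add, Finset.sum_add_distrib] at h0
    rw [sum_swap_filter G.leadV (fun v => starRingEnd ℂ (w v)) a] at h0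
    rw [sum_swap_filter G.ep1 (fun v => starRingEnd ℂ (w v))
      (fun m => (Real.sinh (ℓ m) : ℂ) * α m)] at h0
    rw [sum_swap_filter G.ep0 (fun v => starRingEnd ℂ (w v)) (fun m => -(β m))] at h0
    rw [sum_swap_filter G.ep1 (fun v => starRingEnd ℂ (w v))
      (fun m => (Real.cosh (ℓ m) : ℂ) * β m)] at h0
    have hiso : (∑ v, starRingEnd ℂ (w v) * (if G.isolated v then w v else 0))
        = ∑ v, if G.isolated v then starRingEnd ℂ (w v) * w v else 0 := by
      apply Finset.sum_congr rfl; intro v _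
      split_ifs <;> simp
    rw [hiso] at h0
    have c1 : (∑ k, starRingEnd ℂ (w (G.leadV k)) * a k)
        = ∑ k, starRingEnd ℂ (a k) * a k := by
      apply Finset.sum_congr rfl; intro k _; rw [← eq1]
    have c2 : (∑ m, starRingEnd ℂ (w (G.ep0 m)) * -(β m))
        = ∑ m, -(starRingEnd ℂ (α m) * β m) := by
      apply Finset.sum_congr rfl; intro m _; rw [← eq2]; ring
    have c3 : (∑ m, starRingEnd ℂ (w (G.ep1 m)) * ((Real.sinh (ℓ m) : ℂ) * α m))
          + (∑ m, starRingEnd ℂ (w (G.ep1 m)) * ((Real.cosh (ℓ m) : ℂ) * β m))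
        = ∑ m, starRingEnd ℂ ((Real.cosh (ℓ m) : ℂ) * α m + (Real.sinh (ℓ m) : ℂ) * β m)
            * ((Real.sinh (ℓ m) : ℂ) * α m + (Real.cosh (ℓ m) : ℂ) * β m) := by
      rw [← Finset.sum_add_distrib]
      apply Finset.sum_congr rfl; intro m _
      rw [← eq3]; ring
    rw [c1, c2] at h0
    -- now h0 : Σ conj a * a + Σ sinh-term + (Σ -(conj α β) + Σ cosh-term) + Σ iso = 0
    calc (∑ k, starRingEnd ℂ (a k) * a k)
        + (∑ m, (-(starRingEnd ℂ (α m) * β m)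
          + starRingEnd ℂ ((Real.cosh (ℓ m) : ℂ) * α m + (Real.sinh (ℓ m) : ℂ) * β m)
            * ((Real.sinh (ℓ m) : ℂ) * α m + (Real.cosh (ℓ m) : ℂ) * β m)))
        + (∑ v, if G.isolated v then starRingEnd ℂ (w v) * w v else 0)
        = (∑ k, starRingEnd ℂ (a k) * a k)
          + (∑ m, starRingEnd ℂ (w (G.ep1 m)) * ((Real.sinh (ℓ m) : ℂ) * α m))
          + ((∑ m, -(starRingEnd ℂ (α m) * β m))
            + (∑ m, starRingEnd ℂ (w (G.ep1 m)) * ((Real.cosh (ℓ m) : ℂ) * β m)))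
          + (∑ v, if G.isolated v then starRingEnd ℂ (w v) * w v else 0) := by
          rw [Finset.sum_add_distrib]
          have := c3
          linear_combination -this
    _ = 0 := h0
  -- take real parts
  have hre := congrArg Complex.re hsum
  rw [Complex.add_re, Complex.add_re, Complex.re_sum, Complex.re_sum, Complex.re_sum,
    Complex.zero_re] at hre
  have ra : ∀ k, (starRingEnd ℂ (a k) * a k).re = Complex.normSq (a k) := by
    intro k; rw [mul_comm, Complex.mul_conj, Complex.ofReal_re]
  have rE : ∀ m, 0 ≤ (-(starRingEnd ℂ (α m) * β m)
      + starRingEnd ℂ ((Real.cosh (ℓ m) : ℂ) * α m + (Real.sinh (ℓ m) : ℂ) * β m)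
        * ((Real.sinh (ℓ m) : ℂ) * α m + (Real.cosh (ℓ m) : ℂ) * β m)).re :=
    fun m => energy_nonneg (ℓ m) (hl m) (α m) (β m)
  have rI : ∀ v, (if G.isolated v then starRingEnd ℂ (w v) * w v else 0).re
      = if G.isolated v then Complex.normSq (w v) else 0 := by
    intro v; split_ifs
    · rw [mul_comm, Complex.mul_conj, Complex.ofReal_re]
    · rfl
  simp only [ra, rI] at hre
  -- each group vanishes
  have hA : ∀ k ∈ Finset.univ, (0:ℝ) ≤ Complex.normSq (a k) :=
    fun k _ => Complex.normSq_nonneg _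
  have hB : ∀ m ∈ Finset.univ, (0:ℝ) ≤ (-(starRingEnd ℂ (α m) * β m)
      + starRingEnd ℂ ((Real.cosh (ℓ m) : ℂ) * α m + (Real.sinh (ℓ m) : ℂ) * β m)
        * ((Real.sinh (ℓ m) : ℂ) * α m + (Real.cosh (ℓ m) : ℂ) * β m)).re :=
    fun m _ => rE m
  have hC : ∀ v ∈ Finset.univ, (0:ℝ) ≤ (if G.isolated v then Complex.normSq (w v) else 0) := by
    intro v _; split_ifs
    · exact Complex.normSq_nonneg _
    · exact le_refl 0
  have hAsum : (0:ℝ) ≤ ∑ k, Complex.normSq (a k) := Finset.sum_nonneg hA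
  have hBsum := Finset.sum_nonneg hB
  have hCsum := Finset.sum_nonneg hC
  have hA0 : ∑ k, Complex.normSq (a k) = 0 := by linarith
  have hB0 : ∑ m, (-(starRingEnd ℂ (α m) * β m)
      + starRingEnd ℂ ((Real.cosh (ℓ m) : ℂ) * α m + (Real.sinh (ℓ m) : ℂ) * β m)
        * ((Real.sinh (ℓ m) : ℂ) * α m + (Real.cosh (ℓ m) : ℂ) * β m)).re = 0 := by
    linarith
  have hC0 : ∑ v, (if G.isolated v then Complex.normSq (w v) else 0) = 0 := by linarith
  have haz : ∀ k, a k = 0 := fun k => Complex.normSq_eq_zero.mp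
    ((Finset.sum_eq_zero_iff_of_nonneg hA).mp hA0 k (Finset.mem_univ k))
  have hab : ∀ m, α m = 0 ∧ β m = 0 := fun m => energy_eq_zero (ℓ m) (hl m) _ _
    ((Finset.sum_eq_zero_iff_of_nonneg hB).mp hB0 m (Finset.mem_univ m))
  have hisoz : ∀ v, G.isolated v → w v = 0 := by
    intro v hv
    have := (Finset.sum_eq_zero_iff_of_nonneg hC).mp hC0 v (Finset.mem_univ v)
    rw [if_pos hv] at this
    exact Complex.normSq_eq_zero.mp this
  have hwz : ∀ v, w v = 0 := by
    intro v
    by_cases h1 : ∃ k, G.leadV k = v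
    · obtain ⟨k, hk⟩ := h1; rw [← hk, ← eq1, haz k]
    · by_cases h2 : ∃ m, G.ep0 m = v
      · obtain ⟨m, hm⟩ := h2; rw [← hm, ← eq2, (hab m).1]
      · by_cases h3 : ∃ m, G.ep1 m = v
        · obtain ⟨m, hm⟩ := h3
          rw [← hm, ← eq3 m, (hab m).1, (hab m).2]
          ring
        · apply hisoz v
          push_neg at h1 h2 h3
          exact ⟨h1, h2, h3⟩
  apply hxne
  funext i
  rcases i with k | m | m | v
  · exact haz k
  · exact (hab m).1
  · exact (hab m).2
  · exact hwz v

lemma diff_ite (P : Prop) [Decidable P] (f : ℂ → ℂ) (hf : Differentiable ℂ f) :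
    Differentiable ℂ (fun lam => if P then f lam else 0) := by
  by_cases h : P
  · simpa [h] using hf
  · simp [h]

lemma rmat_entry_differentiable (G : QGraph) (ℓ : Fin G.M → ℝ) (i j) :
    Differentiable ℂ (fun lam => rmat G ℓ lam i j) := by
  classical
  have dcos : ∀ r : ℝ, Differentiable ℂ (fun lam : ℂ => Complex.cos (lam * r)) :=
    fun r => Complex.differentiable_cos.comp (differentiable_id.mul_const _)
  have dsin : ∀ r : ℝ, Differentiable ℂ (fun lam : ℂ => Complex.sin (lam * r)) :=
    fun r => Complex.differentiable_sin.comp (differentiable_id.mul_const _)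
  rcases i with k | m | m | v <;> rcases j with k' | m' | m' | v' <;>
    simp only [rmat]
  · exact diff_ite _ _ (differentiable_const 1)
  · exact differentiable_const 0
  · exact differentiable_const 0
  · exact diff_ite _ _ (differentiable_const (-1))
  · exact differentiable_const 0
  · exact diff_ite _ _ (differentiable_const 1)
  · exact differentiable_const 0
  · exact diff_ite _ _ (differentiable_const (-1))
  · exact differentiable_const 0
  · exact diff_ite _ _ (differentiable_id.mul (dcos (ℓ m)))
  · exact diff_ite _ _ (dsin (ℓ m))
  · exact diff_ite _ _ differentiable_id.neg
  · exact diff_ite _ _ ((differentiable_id.const_mul Complex.I).neg)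
  · exact diff_ite _ _ ((differentiable_id.mul (dsin (ℓ m'))).neg)
  · exact (diff_ite _ _ (differentiable_const (-1))).add (diff_ite _ _ (dcos (ℓ m')))
  · exact diff_ite _ _ (differentiable_const 1)

lemma rmat_det_differentiable (G : QGraph) (ℓ : Fin G.M → ℝ) :
    Differentiable ℂ fun lam => (rmat G ℓ lam).det := by
  classical
  have hdet : (fun lam => (rmat G ℓ lam).det)
      = fun lam => ∑ σ : Equiv.Perm (Fin G.K ⊕ Fin G.M ⊕ Fin G.M ⊕ G.V),
          ((Equiv.Perm.sign σ : ℤ) : ℂ) * ∏ i, rmat G ℓ lam (σ i) i := by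
    funext lam
    rw [Matrix.det_apply']
  rw [hdet]
  apply Differentiable.fun_sum
  intro σ _
  apply Differentiable.const_mul
  apply Differentiable.fun_finsetProd
  intro i _
  exact rmat_entry_differentiable G ℓ (σ i) i

lemma cont_ite (P : Prop) [Decidable P] {X : Type*} [TopologicalSpace X] (f : X → ℂ)
    (hf : Continuous f) : Continuous (fun p : X => if P then f p else 0) := by
  by_cases h : P
  · simpa [h] using hf
  · simp only [h, if_false]
    exact continuous_const

lemma rmat_entry_continuous (G : QGraph) (i j) :
    Continuous (fun p : (Fin G.M → ℝ) × ℂ => rmat G p.1 p.2 i j) := by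
  classical
  have harg : ∀ m : Fin G.M, Continuous (fun p : (Fin G.M → ℝ) × ℂ => p.2 * (p.1 m : ℂ)) := by
    intro m
    exact continuous_snd.mul (Complex.continuous_ofReal.comp ((continuous_apply m).comp
      continuous_fst))
  have hcos : ∀ m : Fin G.M, Continuous
      (fun p : (Fin G.M → ℝ) × ℂ => Complex.cos (p.2 * (p.1 m : ℂ))) :=
    fun m => Complex.continuous_cos.comp (harg m)
  have hsin : ∀ m : Fin G.M, Continuous
      (fun p : (Fin G.M → ℝ) × ℂ => Complex.sin (p.2 * (p.1 m : ℂ))) :=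
    fun m => Complex.continuous_sin.comp (harg m)
  rcases i with k | m | m | v <;> rcases j with k' | m' | m' | v' <;>
    simp only [rmat]
  · exact cont_ite _ _ continuous_const
  · exact continuous_const
  · exact continuous_const
  · exact cont_ite _ _ continuous_const
  · exact continuous_const
  · exact cont_ite _ _ continuous_const
  · exact continuous_const
  · exact cont_ite _ _ continuous_const
  · exact continuous_const
  · exact cont_ite _ _ (continuous_snd.mul (hcos m))
  · exact cont_ite _ _ (hsin m)
  · exact cont_ite _ _ continuous_snd.neg
  · exact cont_ite _ _ ((continuous_const.mul continuous_snd).neg)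
  · exact cont_ite _ _ ((continuous_snd.mul (hsin m')).neg)
  · exact (cont_ite _ _ continuous_const).add (cont_ite _ _ (hcos m'))
  · exact cont_ite _ _ continuous_const

lemma rmat_det_continuous (G : QGraph) :
    Continuous (fun p : (Fin G.M → ℝ) × ℂ => (rmat G p.1 p.2).det) := by
  classical
  have hdet : (fun p : (Fin G.M → ℝ) × ℂ => (rmat G p.1 p.2).det)
      = fun p => ∑ σ : Equiv.Perm (Fin G.K ⊕ Fin G.M ⊕ Fin G.M ⊕ G.V),
          ((Equiv.Perm.sign σ : ℤ) : ℂ) * ∏ i, rmat G p.1 p.2 (σ i) i := by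
    funext p
    rw [Matrix.det_apply']
  rw [hdet]
  apply continuous_finset_sum
  intro σ _
  apply Continuous.mul continuous_const
  apply continuous_finset_prod
  intro i _
  exact rmat_entry_continuous G (σ i) i

open Metric in
lemma zeros_bound (n : ℕ) : ∀ (g : ℂ → ℂ), Differentiable ℂ g → ∀ (c : ℂ) (R m Mb : ℝ),
    0 < R → 0 < m → m ≤ ‖g c‖ → (∀ z ∈ closedBall c R, ‖g z‖ ≤ Mb) →
    ∀ S : Finset ℂ, S.card = n → (∀ z ∈ S, z ∈ closedBall c (R/4) ∧ g z = 0) →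
    m * 3 ^ n ≤ Mb := by
  induction n with
  | zero =>
    intro g hg c R m Mb hR hm hgc hMb S hcard hS
    simpa using hgc.trans (hMb c (mem_closedBall_self hR.le))
  | succ n ih =>
    intro g hg c R m Mb hR hm hgc hMb S hcard hS
    obtain ⟨z₀, hz₀⟩ : S.Nonempty := Finset.card_pos.mp (by omega)
    obtain ⟨hz₀ball, hz₀zero⟩ := hS z₀ hz₀
    have hcz₀ : c ≠ z₀ := by
      rintro rfl
      rw [hz₀zero] at hgc
      simp at hgc
      exact absurd hgc (not_le.2 hm)
    set g₁ : ℂ → ℂ := dslope g z₀ with hg₁def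
    have hg₁ : Differentiable ℂ g₁ := by
      have : DifferentiableOn ℂ g₁ Set.univ := by
        rw [hg₁def, Complex.differentiableOn_dslope (Filter.univ_mem)]
        exact hg.differentiableOn
      exact differentiableOn_univ.mp this
    have hkey : ∀ z : ℂ, (z - z₀) * g₁ z = g z := by
      intro z
      have := sub_smul_dslope g z₀ z
      rw [hz₀zero, sub_zero] at this
      simpa [smul_eq_mul] using this
    -- bound on the sphere of radius R
    have hfr : ∀ z ∈ sphere c R, ‖g₁ z‖ ≤ Mb / (3 * R / 4) := by
      intro z hz
      have hzz₀ : (3 * R / 4) ≤ ‖z - z₀‖ := by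
        have h1 : dist z c = R := mem_sphere.mp hz
        have h2 : dist z₀ c ≤ R / 4 := mem_closedBall.mp hz₀ball
        have htr : dist z c ≤ dist z z₀ + dist z₀ c := dist_triangle z z₀ c
        have h3 : R - R/4 ≤ dist z z₀ := by linarith
        calc (3 * R / 4) = R - R/4 := by ring
        _ ≤ dist z z₀ := h3
        _ = ‖z - z₀‖ := dist_eq_norm _ _
      have hgz : ‖g z‖ ≤ Mb := hMb z (sphere_subset_closedBall hz)
      have := hkey z
      have hnorm : ‖z - z₀‖ * ‖g₁ z‖ = ‖g z‖ := by
        rw [← norm_mul, this]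
      have hzpos : (0:ℝ) < 3 * R / 4 := by linarith
      rw [le_div_iff₀ hzpos]
      nlinarith [norm_nonneg (g₁ z), norm_nonneg (z - z₀), hnorm]
    -- extend by max modulus
    have hball : ∀ z ∈ closedBall c R, ‖g₁ z‖ ≤ Mb / (3 * R / 4) := by
      intro z hz
      have hcl : closure (ball c R) = closedBall c R := closure_ball c hR.ne'
      have hfrb : frontier (ball c R) = sphere c R := frontier_ball c hR.ne'
      have := Complex.norm_le_of_forall_mem_frontier_norm_le (U := ball c R)
        isBounded_ball (hg₁.diffContOnCl) (by rw [hfrb]; exact hfr) (by rw [hcl]; exact hz)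
      exact this
    -- lower bound at c
    have hg₁c : m / (R / 4) ≤ ‖g₁ c‖ := by
      have h1 : ‖c - z₀‖ * ‖g₁ c‖ = ‖g c‖ := by rw [← norm_mul, hkey c]
      have h2 : ‖c - z₀‖ ≤ R / 4 := by
        have := mem_closedBall_iff_norm.mp hz₀ball
        calc ‖c - z₀‖ = ‖z₀ - c‖ := by rw [norm_sub_rev]
        _ ≤ R / 4 := this
      have hq : (0:ℝ) < R / 4 := by linarith
      rw [div_le_iff₀ hq]
      calc m ≤ ‖g c‖ := hgc
      _ = ‖c - z₀‖ * ‖g₁ c‖ := h1.symm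
      _ ≤ (R/4) * ‖g₁ c‖ := by
          apply mul_le_mul_of_nonneg_right h2 (norm_nonneg _)
      _ = ‖g₁ c‖ * (R/4) := by ring
    -- apply IH
    have hmq : 0 < m / (R / 4) := div_pos hm (by linarith)
    have hih := ih g₁ hg₁ c R (m / (R/4)) (Mb / (3*R/4)) hR hmq hg₁c hball
      (S.erase z₀) (by rw [Finset.card_erase_of_mem hz₀]; omega)
      (by
        intro z hz
        obtain ⟨hzne, hzS⟩ := Finset.mem_erase.mp hz
        refine ⟨(hS z hzS).1, ?_⟩
        have := hkey z
        rw [(hS z hzS).2] at this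
        rcases mul_eq_zero.mp this with h | h
        · exact absurd (sub_eq_zero.mp h) hzne
        · exact h)
    -- conclude
    have hR4 : (0:ℝ) < R/4 := by linarith
    have h3R4 : (0:ℝ) < 3*R/4 := by linarith
    rw [div_mul_eq_mul_div, div_le_div_iff₀ hR4 h3R4] at hih
    have : m * 3^n * (3*R/4) = m * 3^(n+1) * (R/4) := by ring
    nlinarith [hih]


/-- The counting bound of Proposition 3.1 of the paper: for any compact `Ω ⊂ ℂ` and
compact `𝓛 ⊂ (0,∞)` there is a constant `C₁ = C₁(Ω, 𝓛)` such that for every choice of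
finite edge lengths in `𝓛` the set of resonances of the Kirchhoff Laplacian lying in
`Ω` is finite with at most `C₁` elements. -/
theorem stmt11 (G : QGraph) (Ω : Set ℂ) (hΩ : IsCompact Ω)
    (L : Set ℝ) (hLcpt : IsCompact L) (hLpos : L ⊆ Set.Ioi 0) :
    ∃ C₁ : ℕ,
      ∀ ℓ : Fin G.M → ℝ, (∀ m, ℓ m ∈ L) →
        {lam ∈ Ω | IsResonance G ℓ lam}.Finite ∧
        {lam ∈ Ω | IsResonance G ℓ lam}.ncard ≤ C₁ := by
  classical
  by_cases hex : ∃ ℓ : Fin G.M → ℝ, ∀ m, ℓ m ∈ L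
  swap
  · exact ⟨0, fun ℓ hℓ => absurd ⟨ℓ, hℓ⟩ hex⟩
  obtain ⟨ℓ₀, hℓ₀⟩ := hex
  set XL : Set (Fin G.M → ℝ) := {ℓ | ∀ m, ℓ m ∈ L} with hXLdef
  have hXLc : IsCompact XL := by
    have hpi : XL = Set.pi Set.univ (fun _ : Fin G.M => L) := by
      ext ℓ; simp [hXLdef, Set.mem_pi]
    rw [hpi]
    exact isCompact_univ_pi fun _ => hLcpt
  have hXLne : XL.Nonempty := ⟨ℓ₀, hℓ₀⟩
  -- minimum of the determinant at λ = i over the compact set of lengths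
  have hcontI : ContinuousOn (fun ℓ : Fin G.M → ℝ => ‖(rmat G ℓ Complex.I).det‖) XL := by
    apply Continuous.continuousOn
    exact ((rmat_det_continuous G).comp (continuous_id.prodMk continuous_const)).norm
  obtain ⟨ℓmin, hℓmin, hminO⟩ := hXLc.exists_isMinOn hXLne hcontI
  set m0 : ℝ := ‖(rmat G ℓmin Complex.I).det‖ with hm0def
  have hm0 : 0 < m0 := by
    have hne := det_I_ne G ℓmin (fun m => Set.mem_Ioi.mp (hLpos (hℓmin m)))
    simpa [hm0def, norm_pos_iff] using hne
  -- radius containing Ω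
  obtain ⟨r, hr⟩ := hΩ.isBounded.subset_closedBall Complex.I
  set R : ℝ := 4 * (|r| + 1) with hRdef
  have hRpos : 0 < R := by positivity
  have hΩsub : Ω ⊆ Metric.closedBall Complex.I (R/4) := by
    refine hr.trans (Metric.closedBall_subset_closedBall ?_)
    have := le_abs_self r
    rw [hRdef]; linarith
  -- maximum over the product
  have hKc : IsCompact (XL ×ˢ Metric.closedBall Complex.I R) :=
    hXLc.prod (isCompact_closedBall _ _)
  have hKne : (XL ×ˢ Metric.closedBall Complex.I R).Nonempty :=
    hXLne.prod ⟨Complex.I, Metric.mem_closedBall_self hRpos.le⟩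
  obtain ⟨pmax, hpmax, hmaxO⟩ := hKc.exists_isMaxOn hKne
    ((rmat_det_continuous G).norm.continuousOn)
  set Mb : ℝ := ‖(rmat G pmax.1 pmax.2).det‖ with hMbdef
  -- choose the constant
  obtain ⟨C₁, hC₁⟩ := pow_unbounded_of_one_lt (Mb / m0) (by norm_num : (1:ℝ) < 3)
  refine ⟨C₁, fun ℓ hℓ => ?_⟩
  have hℓXL : ℓ ∈ XL := hℓ
  have hgI : m0 ≤ ‖(rmat G ℓ Complex.I).det‖ := isMinOn_iff.mp hminO ℓ hℓXL
  have hbound : ∀ z ∈ Metric.closedBall Complex.I R, ‖(rmat G ℓ z).det‖ ≤ Mb := by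
    intro z hz
    exact isMaxOn_iff.mp hmaxO (ℓ, z) (Set.mk_mem_prod hℓXL hz)
  have hfin_bound : ∀ S : Finset ℂ,
      (↑S ⊆ {lam ∈ Ω | IsResonance G ℓ lam}) → S.card ≤ C₁ := by
    intro S hS
    have hz := zeros_bound S.card (fun lam => (rmat G ℓ lam).det)
      (rmat_det_differentiable G ℓ) Complex.I R m0 Mb hRpos hm0 hgI hbound S rfl
      (by
        intro z hzS
        have hzZ := hS hzS
        refine ⟨hΩsub hzZ.1, ?_⟩
        exact resonance_det G ℓ (fun m => (Set.mem_Ioi.mp (hLpos (hℓ m))).le) z hzZ.2)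
    by_contra hgt
    push_neg at hgt
    have h3 : (3:ℝ) ^ (C₁ + 1) ≤ 3 ^ S.card := by
      apply pow_le_pow_right₀ (by norm_num)
      omega
    have hp : (0:ℝ) < 3 ^ C₁ := by positivity
    rw [div_lt_iff₀ hm0] at hC₁
    have e3 : m0 * 3 ^ (C₁+1) ≤ m0 * 3 ^ S.card :=
      mul_le_mul_of_nonneg_left h3 hm0.le
    have e4 : m0 * 3 ^ (C₁+1) = 3 * (3 ^ C₁ * m0) := by ring
    nlinarith [hC₁, hz, e3, e4, hp, hm0]
  have hfin : {lam ∈ Ω | IsResonance G ℓ lam}.Finite := by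
    by_contra hinf
    have hinf' : {lam ∈ Ω | IsResonance G ℓ lam}.Infinite := hinf
    obtain ⟨t, htsub, htfin, htcard⟩ := hinf'.exists_subset_ncard_eq (C₁ + 1)
    have hb := hfin_bound htfin.toFinset (by
      intro z hz
      exact htsub (by simpa using hz))
    rw [← Set.ncard_eq_toFinset_card t htfin, htcard] at hb
    omega
  refine ⟨hfin, ?_⟩
  have hb := hfin_bound hfin.toFinset (by intro z hz; simpa using hz)
  rwa [← Set.ncard_eq_toFinset_card _ hfin] at hb
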